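/- Let α be a finite type with decidable equality, let n : ℕ, let x, y : Fin n → α with E(x) ≠ E(y), and let i : Fin n be the least index with E(x) i ≠ E(y) i. Suppose that both prev_x(i) and prev_y(i) exist. Then x and y p-match with tolerance 1 if and only if x and y p-match after discarding {i}. -/
import Mathlib


/-- The predecessor occurrence of position `i` in `x`: the largest `j < i`
with `x j = x i`, as an element of `WithBot (Fin n)` (`⊥` when none exists). -/
def prevOcc {α : Type*} [DecidableEq α] {n : ℕ} (x : Fin n → α) (i : Fin n) :
    WithBot (Fin n) :=
  (Finset.univ.filter (fun j : Fin n => j < i ∧ x j = x i)).max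

/-- Baker's encoding of a parameterized string. -/
def encode {α : Type*} [DecidableEq α] {n : ℕ} (x : Fin n → α) (i : Fin n) : ℕ :=
  match prevOcc x i with
  | none => 0
  | some j => (i : ℕ) - (j : ℕ)

lemma prevOcc_eq_of_iff {α : Type*} [DecidableEq α] {n : ℕ} {x y : Fin n → α} {i : Fin n}
    (h : ∀ k, k < i → (x k = x i ↔ y k = y i)) : prevOcc x i = prevOcc y i := by
  unfold prevOcc
  congr 1
  apply Finset.filter_congr
  intro k _
  constructor
  · rintro ⟨hk, he⟩; exact ⟨hk, (h k hk).1 he⟩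
  · rintro ⟨hk, he⟩; exact ⟨hk, (h k hk).2 he⟩

lemma prevOcc_some {α : Type*} [DecidableEq α] {n : ℕ} {x : Fin n → α} {i j : Fin n}
    (h : prevOcc x i = (j : WithBot (Fin n))) : j < i ∧ x j = x i := by
  have := Finset.mem_of_max h
  simpa using this

lemma prevOcc_ne_bot_of_mem {α : Type*} [DecidableEq α] {n : ℕ} {x : Fin n → α} {i j : Fin n}
    (h1 : j < i) (h2 : x j = x i) : prevOcc x i ≠ ⊥ := by
  have hmem : j ∈ Finset.univ.filter (fun k : Fin n => k < i ∧ x k = x i) := by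
    simp [h1, h2]
  have := Finset.le_max hmem
  intro hbot
  rw [show prevOcc x i = (Finset.univ.filter (fun k : Fin n => k < i ∧ x k = x i)).max from rfl]
    at hbot
  rw [hbot] at this
  exact absurd this (by simp)

lemma prevOcc_eq_of_encode_eq {α : Type*} [DecidableEq α] {n : ℕ} {x y : Fin n → α} {i : Fin n}
    (h : encode x i = encode y i) : prevOcc x i = prevOcc y i := by
  unfold encode at h
  cases hx : prevOcc x i with
  | bot =>
    cases hy : prevOcc y i with
    | bot => rfl
    | coe j =>
      rw [hx, hy] at h
      have hj := (prevOcc_some hy).1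
      have : (j : ℕ) < (i : ℕ) := hj
      simp at h
      omega
  | coe j =>
    cases hy : prevOcc y i with
    | bot =>
      rw [hx, hy] at h
      have hj := (prevOcc_some hx).1
      have : (j : ℕ) < (i : ℕ) := hj
      simp at h
      omega
    | coe k =>
      rw [hx, hy] at h
      simp only at h
      have hj : (j : ℕ) < (i : ℕ) := (prevOcc_some hx).1
      have hk : (k : ℕ) < (i : ℕ) := (prevOcc_some hy).1
      have : (j : ℕ) = (k : ℕ) := by omega
      rw [Fin.val_injective this]

lemma encode_eq_of_prevOcc_eq {α : Type*} [DecidableEq α] {n : ℕ} {x y : Fin n → α} {i : Fin n}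
    (h : prevOcc x i = prevOcc y i) : encode x i = encode y i := by
  unfold encode
  rw [h]

/-- Core contradiction: if `z` and `y` agree except at `d < i`, differ at `d`, their
encodings agree strictly below `i` but differ at `i`, both have a previous occurrence
at `i`, and moreover `z d = z i`, then we reach a contradiction. -/
lemma core_contra {α : Type*} [DecidableEq α] {n : ℕ} (z y : Fin n → α) (d i : Fin n)
    (hdi : d < i)
    (hagree : ∀ j, j ≠ d → z j = y j) (hzd : z d ≠ y d)
    (henc_lt : ∀ j, j < i → encode z j = encode y j)
    (henc_i : encode z i ≠ encode y i)
    (hpz : prevOcc z i ≠ ⊥) (hpy : prevOcc y i ≠ ⊥)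
    (hdS : z d = z i) : False := by
  have hdne : d ≠ i := ne_of_lt hdi
  have hzi : z i = y i := hagree i (Ne.symm hdne)
  have hprev_ne : prevOcc z i ≠ prevOcc y i := fun h => henc_i (encode_eq_of_prevOcc_eq h)
  -- membership transfer off d
  have key : ∀ k, k ≠ d → (z k = z i ↔ y k = y i) := by
    intro k hk
    rw [hagree k hk, hzi]
  have hdnotSy : y d ≠ y i := by
    intro h
    apply hprev_ne
    apply prevOcc_eq_of_iff
    intro k _
    by_cases hk : k = d
    · subst hk; rw [hdS, h]; simp
    · exact key k hk
  obtain ⟨m, hm⟩ : ∃ m : Fin n, prevOcc z i = (m : WithBot (Fin n)) := by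
    cases h : prevOcc z i with
    | bot => exact absurd h hpz
    | coe m => exact ⟨m, rfl⟩
  obtain ⟨p, hp⟩ : ∃ p : Fin n, prevOcc y i = (p : WithBot (Fin n)) := by
    cases h : prevOcc y i with
    | bot => exact absurd h hpy
    | coe p => exact ⟨p, rfl⟩
  obtain ⟨hmi, hzm⟩ := prevOcc_some hm
  obtain ⟨hpi, hyp⟩ := prevOcc_some hp
  have hpd : p ≠ d := by
    intro h; rw [h] at hyp; exact hdnotSy hyp
  -- p ∈ S_z
  have hzp : z p = z i := (key p hpd).2 hyp
  -- m = d
  have hmd : m = d := by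
    by_contra hmd
    have hym : y m = y i := (key m hmd).1 hzm
    -- m ≤ p
    have h1 : (m : WithBot (Fin n)) ≤ prevOcc y i := by
      apply Finset.le_max
      simp [hmi, hym]
    -- p ≤ m
    have h2 : (p : WithBot (Fin n)) ≤ prevOcc z i := by
      apply Finset.le_max
      simp [hpi, hzp]
    rw [hp] at h1
    rw [hm] at h2
    have h1' : m ≤ p := WithBot.coe_le_coe.mp h1
    have h2' : p ≤ m := WithBot.coe_le_coe.mp h2
    have : m = p := le_antisymm h1' h2'
    rw [hm, hp, this] at hprev_ne
    exact hprev_ne rfl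
  -- p < d
  have hp_lt_d : p < d := by
    have h2 : (p : WithBot (Fin n)) ≤ prevOcc z i := by
      apply Finset.le_max
      simp [hpi, hzp]
    rw [hm, hmd] at h2
    exact lt_of_le_of_ne (WithBot.coe_le_coe.mp h2) hpd
  -- previous occurrence of z at d exists: p
  have hzpd : z p = z d := by rw [hzp, hdS]
  have hpzd : prevOcc z d ≠ ⊥ := prevOcc_ne_bot_of_mem hp_lt_d hzpd
  have henc_d : encode z d = encode y d := henc_lt d hdi
  have hprev_d : prevOcc z d = prevOcc y d := prevOcc_eq_of_encode_eq henc_d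
  obtain ⟨q, hq⟩ : ∃ q : Fin n, prevOcc z d = (q : WithBot (Fin n)) := by
    cases h : prevOcc z d with
    | bot => exact absurd h hpzd
    | coe q => exact ⟨q, rfl⟩
  obtain ⟨hqd, hzq⟩ := prevOcc_some hq
  have hq' : prevOcc y d = (q : WithBot (Fin n)) := by rw [← hprev_d, hq]
  obtain ⟨_, hyq⟩ := prevOcc_some hq'
  have hqne : q ≠ d := ne_of_lt hqd
  have : z d = y d := by
    rw [← hzq, hagree q hqne, hyq]
  exact hzd this

theorem tol_one_iff_discard_first_mismatch {α : Type*} [Fintype α] [DecidableEq α]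
    (n : ℕ) (x y : Fin n → α) (hne : encode x ≠ encode y) (i : Fin n)
    (hi : encode x i ≠ encode y i) (hleast : ∀ j : Fin n, j < i → encode x j = encode y j)
    (hpx : prevOcc x i ≠ ⊥) (hpy : prevOcc y i ≠ ⊥) :
    (∃ D : Finset (Fin n), D.card ≤ 1 ∧ ∃ π : Equiv.Perm α, ∀ j ∉ D, π (x j) = y j) ↔
      ∃ π : Equiv.Perm α, ∀ j ∉ ({i} : Finset (Fin n)), π (x j) = y j := by
  constructor
  · rintro ⟨D, hcard, π, hπ⟩
    set z : Fin n → α := fun j => π (x j) with hz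
    -- encode z = encode x
    have hprev_zx : ∀ j : Fin n, prevOcc z j = prevOcc x j := by
      intro j
      apply prevOcc_eq_of_iff
      intro k _
      simp only [hz]
      exact ⟨fun h => π.injective h, fun h => by rw [h]⟩
    have henc_zx : ∀ j : Fin n, encode z j = encode x j := fun j =>
      encode_eq_of_prevOcc_eq (hprev_zx j)
    rcases D.eq_empty_or_nonempty with hD | ⟨d, hd⟩
    · subst hD
      exact ⟨π, fun j _ => hπ j (by simp)⟩
    · have hDsing : D = {d} := by
        apply Finset.eq_singleton_iff_unique_mem.mpr
        refine ⟨hd, fun b hb => ?_⟩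
        exact Finset.card_le_one.mp hcard b hb d hd
      subst hDsing
      have hagree : ∀ j, j ≠ d → z j = y j := fun j hj => hπ j (by simp [hj])
      by_cases hdi : d = i
      · subst hdi
        exact ⟨π, fun j hj => hπ j hj⟩
      rcases lt_trichotomy d i with hlt | heq | hgt
      · -- d < i
        by_cases hzyd : z d = y d
        · refine ⟨π, fun j _ => ?_⟩
          by_cases hj : j = d
          · subst hj; exact hzyd
          · exact hagree j hj
        · exfalso
          have hzi : z i = y i := hagree i (Ne.symm hdi)
          have henc_lt : ∀ j, j < i → encode z j = encode y j := by
            intro j hj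
            rw [henc_zx j]; exact hleast j hj
          have henc_i : encode z i ≠ encode y i := by
            rw [henc_zx i]; exact hi
          have hpz : prevOcc z i ≠ ⊥ := by rw [hprev_zx i]; exact hpx
          -- z d = z i or y d = y i, else prevOcc equal
          by_cases hdSz : z d = z i
          · exact core_contra z y d i hlt hagree hzyd henc_lt henc_i hpz hpy hdSz
          · by_cases hdSy : y d = y i
            · exact core_contra y z d i hlt (fun j hj => (hagree j hj).symm)
                (fun h => hzyd h.symm)
                (fun j hj => (henc_lt j hj).symm) (fun h => henc_i h.symm)
                hpy hpz hdSy
            · apply henc_i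
              apply encode_eq_of_prevOcc_eq
              apply prevOcc_eq_of_iff
              intro k _
              by_cases hk : k = d
              · subst hk
                constructor
                · intro h; exact absurd h hdSz
                · intro h; exact absurd h hdSy
              · rw [hagree k hk, hzi]
      · exact absurd heq hdi
      · -- i < d : z and y agree on [0, i], so encodings at i agree, contradiction
        exfalso
        apply hi
        rw [← henc_zx i]
        apply encode_eq_of_prevOcc_eq
        apply prevOcc_eq_of_iff
        intro k hk
        have hki : k ≠ d := ne_of_lt (lt_trans hk hgt)
        rw [hagree k hki, hagree i (Ne.symm hdi)]
  · rintro ⟨π, hπ⟩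
    exact ⟨{i}, by simp, π, hπ⟩
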